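/- The 4×4 symmetric matrix with zero diagonal, entries A(1,2) = A(2,1) = √3, A(3,4) = A(4,3) = √3, A(2,4) = A(4,2) = 1, A(1,3) = A(3,1) = −1, and all other entries 0, has characteristic polynomial (x² − 4)² and hence all eigenvalues ±2 and integer characteristic polynomial. -/

import Mathlib

open Polynomial

/-- The adjacency matrix of the sporadic maximal cyclotomic `ℤ[√3]`-graph `S₄^(√3)` has
characteristic polynomial `(x² - 4)²`, hence all eigenvalues `±2` and integer
characteristic polynomial. -/
theorem stmt15 :
    (!![(0 : ℝ), Real.sqrt 3, -1, 0;
        Real.sqrt 3, 0, 0, 1;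
        -1, 0, 0, Real.sqrt 3;
        0, 1, Real.sqrt 3, 0]).charpoly = (X ^ 2 - C 4) ^ 2 ∧
    spectrum ℝ (!![(0 : ℝ), Real.sqrt 3, -1, 0;
        Real.sqrt 3, 0, 0, 1;
        -1, 0, 0, Real.sqrt 3;
        0, 1, Real.sqrt 3, 0]) ⊆ {-2, 2} ∧
    (∀ k, ∃ m : ℤ, (!![(0 : ℝ), Real.sqrt 3, -1, 0;
        Real.sqrt 3, 0, 0, 1;
        -1, 0, 0, Real.sqrt 3;
        0, 1, Real.sqrt 3, 0]).charpoly.coeff k = (m : ℝ)) := by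
  set M : Matrix (Fin 4) (Fin 4) ℝ :=
    !![(0 : ℝ), Real.sqrt 3, -1, 0;
        Real.sqrt 3, 0, 0, 1;
        -1, 0, 0, Real.sqrt 3;
        0, 1, Real.sqrt 3, 0] with hM
  have h1 : M.charpoly = (X ^ 2 - C 4) ^ 2 := by
    have ht : (C (Real.sqrt 3) : ℝ[X]) * C (Real.sqrt 3) = C 3 := by
      rw [← C_mul, Real.mul_self_sqrt (by norm_num)]
    rw [hM, Matrix.charpoly]
    simp only [Matrix.charmatrix_apply, Matrix.det_succ_row_zero, Fin.sum_univ_succ,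
      Fin.sum_univ_zero, Matrix.submatrix_apply, Matrix.cons_val', Matrix.cons_val_zero,
      Matrix.cons_val_one, Matrix.head_cons, Matrix.head_fin_const, Fin.succ_zero_eq_one,
      Fin.succ_one_eq_two, Matrix.diagonal_apply, Matrix.one_apply, Matrix.of_apply,
      Matrix.cons_val_fin_one, Matrix.empty_val', Matrix.cons_val_succ, Fin.succAbove,
      Matrix.det_fin_one, Matrix.det_fin_zero]
    simp (config := { decide := true }) only [Fin.succ, Fin.lt_def, Fin.castSucc, Fin.castAdd,
      Fin.castLE, map_neg, if_true, if_false, Fin.mk.injEq, Fin.ext_iff, Nat.reduceEqDiff,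
      Matrix.cons_val]
    norm_num
    simp only [map_ofNat] at ht ⊢
    linear_combination (C (Real.sqrt 3) * C (Real.sqrt 3) + 5 - 2 * X ^ 2) * ht
  refine ⟨h1, ?_, ?_⟩
  · intro μ hμ
    have h2 : aeval M ((X ^ 2 - C 4) ^ 2 : ℝ[X]) = 0 := by
      rw [← h1]; exact M.aeval_self_charpoly
    have h3 := spectrum.subset_polynomial_aeval M ((X ^ 2 - C 4) ^ 2 : ℝ[X])
      ⟨μ, hμ, rfl⟩
    rw [h2, spectrum.zero_eq] at h3
    have h4 : (μ ^ 2 - 4) ^ 2 = 0 := by simpa using h3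
    have h5 : μ ^ 2 - 4 = 0 := by
      exact pow_eq_zero_iff (n := 2) (by norm_num) |>.mp h4
    have : (μ - 2) * (μ + 2) = 0 := by ring_nf; linarith
    rcases mul_eq_zero.mp this with h | h
    · right; show μ = 2; linarith
    · left; show μ = -2; linarith [h]
  · intro k
    refine ⟨(((X : ℤ[X]) ^ 2 - C 4) ^ 2).coeff k, ?_⟩
    have : (((X : ℤ[X]) ^ 2 - C 4) ^ 2).map (Int.castRingHom ℝ) = ((X : ℝ[X]) ^ 2 - C 4) ^ 2 := by
      simp only [Polynomial.map_pow, Polynomial.map_sub, Polynomial.map_X, map_C, map_ofNat, Polynomial.map_ofNat]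
    rw [h1, ← this, Polynomial.coeff_map]
    simp
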